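/- Hubbard model: fix N ≥ 1 and a connected simple graph G on Fin N, and work with 2N qubits, where qubit i is the spin-up copy and qubit N+i the spin-down copy of lattice site i. Let S_Hub = {→X_iX_j, →Y_iY_j : (i,j) an edge of G} ∪ {→X_{N+i}X_{N+j}, →Y_{N+i}Y_{N+j} : (i,j) an edge of G} ∪ {Z_iZ_{N+i} : i ∈ Fin N} (the Pauli strings of the Jordan–Wigner transform of the Hubbard model on G with hopping t ≠ 0 and interaction U ≠ 0). Then dim g(S_Hub) ≥ 2^(N−1). -/

import Mathlib

open Matrix

attribute [local instance 100] LieRing.ofAssociativeRing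

/-- The four 2×2 Pauli matrices: identity, X, Y, Z. -/
noncomputable def pauli : Fin 4 → Matrix (Fin 2) (Fin 2) ℂ
  | 0 => 1
  | 1 => !![0, 1; 1, 0]
  | 2 => !![0, -Complex.I; Complex.I, 0]
  | 3 => !![1, 0; 0, -1]

/-- The matrix of an `n`-qubit Pauli string `p : Fin n → Fin 4`,
the Kronecker product of the `pauli (p i)`. -/
noncomputable def PauliMat {n : ℕ} (p : Fin n → Fin 4) :
    Matrix (Fin n → Fin 2) (Fin n → Fin 2) ℂ :=
  Matrix.of fun x y => ∏ i, pauli (p i) (x i) (y i)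

/-- The Hamiltonian algebra of a set of Pauli strings: the Lie ℝ-subalgebra of the
complex matrices generated by `{I • P(p) : p ∈ S}`. -/
noncomputable def hamAlg {n : ℕ} (S : Set (Fin n → Fin 4)) :
    LieSubalgebra ℝ (Matrix (Fin n → Fin 2) (Fin n → Fin 2) ℂ) :=
  LieSubalgebra.lieSpan ℝ _ ((fun p => Complex.I • PauliMat p) '' S)

/-- The Pauli string `→A_iB_j`: letter `A` at `i`, letter `B` at `j`, `Z` strictly
between `i` and `j`, identity elsewhere. -/
def ladderString {n : ℕ} (i j : Fin n) (A B : Fin 4) : Fin n → Fin 4 :=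
  fun k => if k = i then A else if k = j then B
    else if min i j < k ∧ k < max i j then 3 else 0

/-- The Pauli string `Z_kZ_l`. -/
def zzString {n : ℕ} (k l : Fin n) : Fin n → Fin 4 :=
  fun m => if m = k ∨ m = l then 3 else 0

/-- The Pauli string `Z_k`. -/
def zString {n : ℕ} (k : Fin n) : Fin n → Fin 4 :=
  fun m => if m = k then 3 else 0

/-- A choice of letter: `X` if `c = 0`, `Y` if `c = 1`. -/
def ltr (c : Fin 2) : Fin 4 := if c = 0 then 1 else 2

/-- The opposite letter: `Y` if `c = 0`, `X` if `c = 1`. -/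
def ltrBar (c : Fin 2) : Fin 4 := if c = 0 then 2 else 1

/-- Pauli strings of the Jordan–Wigner transformed hopping terms of one spin species,
with sites embedded via `v : Fin N → Fin (2N)` and hoppings on the edges of `G`. -/
def Sspin {N : ℕ} (G : SimpleGraph (Fin N)) (v : Fin N → Fin (2 * N)) :
    Set (Fin (2 * N) → Fin 4) :=
  {p | ∃ k l : Fin N, G.Adj k l ∧
    (p = ladderString (v k) (v l) 1 1 ∨ p = ladderString (v k) (v l) 2 2)}

/-- Pauli strings of the Jordan–Wigner transformed free fermion model. -/
def Sfree {N : ℕ} (G : SimpleGraph (Fin N)) (u d : Fin N → Fin (2 * N)) :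
    Set (Fin (2 * N) → Fin 4) :=
  Sspin G u ∪ Sspin G d

/-- Pauli strings of the model with a single on-site Coulomb interaction at fermion
site `i0` (interaction term `Z_{u i0} Z_{d i0}`). -/
def Sint {N : ℕ} (G : SimpleGraph (Fin N)) (u d : Fin N → Fin (2 * N)) (i0 : Fin N) :
    Set (Fin (2 * N) → Fin 4) :=
  Sfree G u d ∪ {zzString (u i0) (d i0)}

/-- Pauli strings of the Jordan–Wigner transformed Hubbard model on a graph `G`:
hopping strings for both spin species and on-site interaction strings
`Z_i Z_{N+i}` for every site `i`. -/
def S_Hub (N : ℕ) (G : SimpleGraph (Fin N)) : Set (Fin (2 * N) → Fin 4) :=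
  {p | ∃ i j : Fin N, G.Adj i j ∧
      (p = ladderString (⟨i.val, by have := i.isLt; omega⟩ : Fin (2 * N))
              ⟨j.val, by have := j.isLt; omega⟩ 1 1 ∨
       p = ladderString (⟨i.val, by have := i.isLt; omega⟩ : Fin (2 * N))
              ⟨j.val, by have := j.isLt; omega⟩ 2 2 ∨
       p = ladderString (⟨N + i.val, by have := i.isLt; omega⟩ : Fin (2 * N))
              ⟨N + j.val, by have := j.isLt; omega⟩ 1 1 ∨
       p = ladderString (⟨N + i.val, by have := i.isLt; omega⟩ : Fin (2 * N))
              ⟨N + j.val, by have := j.isLt; omega⟩ 2 2)} ∪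
  {p | ∃ i : Fin N,
      p = zzString (⟨i.val, by have := i.isLt; omega⟩ : Fin (2 * N))
            ⟨N + i.val, by have := i.isLt; omega⟩}


-- core lemmas appended to preamble
section Core
open Complex

lemma pauli_zero : pauli 0 = 1 := rfl

lemma pauli_mul_self (a : Fin 4) : pauli a * pauli a = 1 := by
  fin_cases a <;>
    · ext i j
      fin_cases i <;> fin_cases j <;>
        simp [pauli, Matrix.mul_apply, Fin.sum_univ_two, Matrix.one_apply] <;> ring_nf <;>
        simp [Complex.I_sq] <;> ring

lemma pauli_ZX : pauli 3 * pauli 1 = Complex.I • pauli 2 := by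
  ext i j; fin_cases i <;> fin_cases j <;>
    simp [pauli, Matrix.mul_apply, Fin.sum_univ_two] <;> ring
lemma pauli_XZ : pauli 1 * pauli 3 = (-Complex.I) • pauli 2 := by
  ext i j; fin_cases i <;> fin_cases j <;>
    simp [pauli, Matrix.mul_apply, Fin.sum_univ_two] <;> ring
lemma pauli_XY : pauli 1 * pauli 2 = Complex.I • pauli 3 := by
  ext i j; fin_cases i <;> fin_cases j <;>
    simp [pauli, Matrix.mul_apply, Fin.sum_univ_two] <;> ring_nf <;> simp [Complex.I_sq]
lemma pauli_YX : pauli 2 * pauli 1 = (-Complex.I) • pauli 3 := by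
  ext i j; fin_cases i <;> fin_cases j <;>
    simp [pauli, Matrix.mul_apply, Fin.sum_univ_two] <;> ring_nf <;> simp [Complex.I_sq]
lemma pauli_ZY : pauli 3 * pauli 2 = (-Complex.I) • pauli 1 := by
  ext i j; fin_cases i <;> fin_cases j <;>
    simp [pauli, Matrix.mul_apply, Fin.sum_univ_two] <;> ring
lemma pauli_YZ : pauli 2 * pauli 3 = Complex.I • pauli 1 := by
  ext i j; fin_cases i <;> fin_cases j <;>
    simp [pauli, Matrix.mul_apply, Fin.sum_univ_two] <;> ring

lemma PauliMat_mul {n : ℕ} (p q : Fin n → Fin 4) :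
    PauliMat p * PauliMat q =
      Matrix.of fun x y => ∏ i, (pauli (p i) * pauli (q i)) (x i) (y i) := by
  ext x y
  simp only [PauliMat, Matrix.mul_apply, Matrix.of_apply]
  rw [Finset.prod_univ_sum, Fintype.piFinset_univ]
  exact Finset.sum_congr rfl fun z _ => Finset.prod_mul_distrib.symm

lemma trace_pauli_mul (a b : Fin 4) :
    (pauli a * pauli b).trace = if a = b then 2 else 0 := by
  fin_cases a <;> fin_cases b <;>
    simp [pauli, Matrix.trace_fin_two, Matrix.mul_apply, Fin.sum_univ_two] <;> ring_nf <;>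
    simp [Complex.I_sq] <;> ring

lemma trace_PauliMat_mul {n : ℕ} (p q : Fin n → Fin 4) :
    (PauliMat p * PauliMat q).trace = if p = q then (2 : ℂ) ^ n else 0 := by
  have h : (PauliMat p * PauliMat q).trace = ∏ i, (pauli (p i) * pauli (q i)).trace := by
    rw [PauliMat_mul]
    simp only [Matrix.trace, Matrix.diag, Matrix.of_apply]
    simp only [Matrix.trace, Matrix.diag, Matrix.mul_apply]
    rw [Finset.prod_univ_sum, Fintype.piFinset_univ]
  rw [h]
  by_cases hpq : p = q
  · subst hpq
    simp [trace_pauli_mul]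
  · rw [if_neg hpq]
    obtain ⟨i, hi⟩ := Function.ne_iff.mp hpq
    exact Finset.prod_eq_zero (Finset.mem_univ i) (by simp [trace_pauli_mul, hi])

end Core

section Step

lemma PauliMat_mul_eq_smul {n : ℕ} (p q r : Fin n → Fin 4) (i0 : Fin n) (c : ℂ)
    (hi0 : pauli (p i0) * pauli (q i0) = c • pauli (r i0))
    (hoth : ∀ i, i ≠ i0 → pauli (p i) * pauli (q i) = pauli (r i)) :
    PauliMat p * PauliMat q = c • PauliMat r := by
  rw [PauliMat_mul]
  ext x y
  simp only [Matrix.of_apply, Matrix.smul_apply, PauliMat, smul_eq_mul]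
  rw [← Finset.prod_erase_mul Finset.univ _ (Finset.mem_univ i0),
      ← Finset.prod_erase_mul Finset.univ _ (Finset.mem_univ i0)]
  have h1 : ∀ i ∈ Finset.univ.erase i0,
      (pauli (p i) * pauli (q i)) (x i) (y i) = pauli (r i) (x i) (y i) := by
    intro i hi
    rw [hoth i (Finset.mem_erase.mp hi).1]
  rw [Finset.prod_congr rfl h1, hi0]
  simp only [Matrix.smul_apply, smul_eq_mul]
  ring

lemma bracket_step {n : ℕ} (p q r : Fin n → Fin 4) (i0 : Fin n) (c : ℂ)
    (hc : c = Complex.I ∨ c = -Complex.I)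
    (hi0 : pauli (p i0) * pauli (q i0) = c • pauli (r i0))
    (hi0' : pauli (q i0) * pauli (p i0) = (-c) • pauli (r i0))
    (hoth : ∀ i, i ≠ i0 → pauli (p i) * pauli (q i) = pauli (r i))
    (hoth' : ∀ i, i ≠ i0 → pauli (q i) * pauli (p i) = pauli (r i)) :
    ∃ t : ℝ, t ≠ 0 ∧
      ⁅Complex.I • PauliMat p, Complex.I • PauliMat q⁆ =
        t • (Complex.I • PauliMat r) := by
  have hpq := PauliMat_mul_eq_smul p q r i0 c hi0 hoth
  have hqp := PauliMat_mul_eq_smul q p r i0 (-c) hi0' hoth'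
  have hbr : ⁅Complex.I • PauliMat p, Complex.I • PauliMat q⁆
      = (-(2 : ℂ) * c) • PauliMat r := by
    rw [Ring.lie_def]
    rw [smul_mul_assoc, smul_mul_assoc, mul_smul_comm, mul_smul_comm, hpq, hqp]
    rw [smul_smul, smul_smul, smul_smul, smul_smul]
    rw [← sub_smul]
    congr 1
    have hI : Complex.I * Complex.I = -1 := Complex.I_mul_I
    ring_nf
    rw [Complex.I_sq]
    ring
  rcases hc with hc | hc
  · refine ⟨-2, by norm_num, ?_⟩
    rw [hbr, hc, ← algebraMap_smul ℂ (-2 : ℝ) (Complex.I • PauliMat r), smul_smul]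
    norm_num
  · refine ⟨2, by norm_num, ?_⟩
    rw [hbr, hc, ← algebraMap_smul ℂ (2 : ℝ) (Complex.I • PauliMat r), smul_smul]
    norm_num

/-- membership predicate -/
def memA {n : ℕ} (S : Set (Fin n → Fin 4)) (p : Fin n → Fin 4) : Prop :=
  Complex.I • PauliMat p ∈ hamAlg S

lemma memA_of_mem {n : ℕ} {S : Set (Fin n → Fin 4)} {p : Fin n → Fin 4} (hp : p ∈ S) :
    memA S p :=
  LieSubalgebra.subset_lieSpan ⟨p, hp, rfl⟩

lemma memA_bracket {n : ℕ} {S : Set (Fin n → Fin 4)} {p q : Fin n → Fin 4}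
    (r : Fin n → Fin 4) (i0 : Fin n) (c : ℂ)
    (hp : memA S p) (hq : memA S q)
    (hc : c = Complex.I ∨ c = -Complex.I)
    (hi0 : pauli (p i0) * pauli (q i0) = c • pauli (r i0))
    (hi0' : pauli (q i0) * pauli (p i0) = (-c) • pauli (r i0))
    (hoth : ∀ i, i ≠ i0 → pauli (p i) * pauli (q i) = pauli (r i))
    (hoth' : ∀ i, i ≠ i0 → pauli (q i) * pauli (p i) = pauli (r i)) :
    memA S r := by
  obtain ⟨t, ht, hbr⟩ := bracket_step p q r i0 c hc hi0 hi0' hoth hoth'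
  have hmem : t • (Complex.I • PauliMat r) ∈ hamAlg S := by
    rw [← hbr]; exact LieSubalgebra.lie_mem _ hp hq
  have := (hamAlg S).smul_mem t⁻¹ hmem
  rwa [smul_smul, inv_mul_cancel₀ ht, one_smul] at this

end Step

section Indep

lemma linearIndependent_fam {n : ℕ} {ι : Type} [DecidableEq ι] (f : ι → (Fin n → Fin 4))
    (hinj : Function.Injective f) :
    LinearIndependent ℝ (fun T => Complex.I • PauliMat (f T)) := by
  rw [linearIndependent_iff']
  intro s g hsum T0 hT0
  have h := congrArg (fun M => (PauliMat (f T0) * M).trace) hsum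
  simp only [Finset.mul_sum, Matrix.mul_smul, Matrix.trace_sum, Matrix.trace_smul,
    Matrix.mul_zero, Matrix.trace_zero] at h
  have hterm : ∀ T ∈ s, g T • (Complex.I • (PauliMat (f T0) * PauliMat (f T)).trace)
      = if T = T0 then g T0 • (Complex.I • ((2:ℂ) ^ n)) else 0 := by
    intro T _
    by_cases hT : T = T0
    · subst hT
      rw [trace_PauliMat_mul, if_pos rfl, if_pos rfl]
    · rw [if_neg hT, trace_PauliMat_mul, if_neg (fun hh => hT (hinj hh.symm))]
      simp
  rw [Finset.sum_congr rfl hterm, Finset.sum_ite_eq' s T0, if_pos hT0] at h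
  have h2 : (g T0 : ℂ) * (Complex.I * (2:ℂ)^n) = 0 := by
    rw [← Complex.real_smul]
    simpa [smul_eq_mul] using h
  have h3 : (g T0 : ℂ) = 0 :=
    (mul_eq_zero.mp h2).resolve_right
      (mul_ne_zero Complex.I_ne_zero (pow_ne_zero _ two_ne_zero))
  exact_mod_cast h3

lemma card_le_finrank_hamAlg {n : ℕ} (S : Set (Fin n → Fin 4)) {ι : Type} [Fintype ι]
    (f : ι → (Fin n → Fin 4)) (hinj : Function.Injective f)
    (hmem : ∀ T, memA S (f T)) :
    Fintype.card ι ≤ Module.finrank ℝ (hamAlg S) := by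
  classical
  have hli := linearIndependent_fam f hinj
  have hspan : Submodule.span ℝ (Set.range fun T => Complex.I • PauliMat (f T))
      ≤ (hamAlg S).toSubmodule := by
    rw [Submodule.span_le]
    rintro _ ⟨T, rfl⟩
    exact hmem T
  calc Fintype.card ι
      = Module.finrank ℝ (Submodule.span ℝ (Set.range fun T => Complex.I • PauliMat (f T))) :=
        (finrank_span_eq_card hli).symm
    _ ≤ Module.finrank ℝ (hamAlg S).toSubmodule := Submodule.finrank_mono hspan
    _ = Module.finrank ℝ (hamAlg S) := rfl

end Indep

section Comb

lemma fin_val_min {n : ℕ} (x y : Fin n) : ((min x y : Fin n) : ℕ) = min (x : ℕ) (y : ℕ) := by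
  rcases le_total x y with h | h
  · rw [min_eq_left h, min_eq_left (Fin.le_def.mp h)]
  · rw [min_eq_right h, min_eq_right (Fin.le_def.mp h)]

lemma fin_val_max {n : ℕ} (x y : Fin n) : ((max x y : Fin n) : ℕ) = max (x : ℕ) (y : ℕ) := by
  rcases le_total x y with h | h
  · rw [max_eq_right h, max_eq_right (Fin.le_def.mp h)]
  · rw [max_eq_left h, max_eq_left (Fin.le_def.mp h)]

lemma ladder_apply {n : ℕ} (u v : Fin n) (A B : Fin 4) (m : Fin n) :
    ladderString u v A B m =
      if (m : ℕ) = (u : ℕ) then A else if (m : ℕ) = (v : ℕ) then B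
      else if min (u : ℕ) (v : ℕ) < (m : ℕ) ∧ (m : ℕ) < max (u : ℕ) (v : ℕ) then 3 else 0 := by
  simp only [ladderString, Fin.ext_iff, Fin.lt_def, fin_val_min, fin_val_max]

lemma zz_apply {n : ℕ} (u v : Fin n) (m : Fin n) :
    zzString u v m = if (m : ℕ) = (u : ℕ) ∨ (m : ℕ) = (v : ℕ) then 3 else 0 := by
  simp only [zzString, Fin.ext_iff]

def uE {N : ℕ} (i : Fin N) : Fin (2 * N) := ⟨i.val, by have := i.isLt; omega⟩
def dE {N : ℕ} (i : Fin N) : Fin (2 * N) := ⟨N + i.val, by have := i.isLt; omega⟩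

@[simp] lemma uE_val {N : ℕ} (i : Fin N) : ((uE i : Fin (2 * N)) : ℕ) = (i : ℕ) := rfl
@[simp] lemma dE_val {N : ℕ} (i : Fin N) : ((dE i : Fin (2 * N)) : ℕ) = N + (i : ℕ) := rfl

/-- `Y_a Γ X_b ⊗ Z_{N+k}` -/
def Mstr (N : ℕ) (a b k : Fin N) : Fin (2 * N) → Fin 4 := fun m =>
  if (m : ℕ) = (a : ℕ) then 2 else if (m : ℕ) = (b : ℕ) then 1
  else if min (a : ℕ) (b : ℕ) < (m : ℕ) ∧ (m : ℕ) < max (a : ℕ) (b : ℕ) then 3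
  else if (m : ℕ) = N + (k : ℕ) then 3 else 0

/-- intermediate string in the move step -/
def T1str (N : ℕ) (a b j k : Fin N) : Fin (2 * N) → Fin 4 := fun m =>
  if (m : ℕ) = (a : ℕ) then 2 else if (m : ℕ) = (b : ℕ) then 1
  else if min (a : ℕ) (b : ℕ) < (m : ℕ) ∧ (m : ℕ) < max (a : ℕ) (b : ℕ) then 3
  else if (m : ℕ) = N + (j : ℕ) then 2 else if (m : ℕ) = N + (k : ℕ) then 1
  else if N + min (j : ℕ) (k : ℕ) < (m : ℕ) ∧ (m : ℕ) < N + max (j : ℕ) (k : ℕ) then 3 else 0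

/-- the main family -/
def Pstr {N : ℕ} (a b : Fin N) (T : Finset (Fin N)) : Fin (2 * N) → Fin 4 := fun m =>
  if (m : ℕ) = (a : ℕ) then (if Even T.card then 1 else 3)
  else if Even T.card ∧ (m : ℕ) = (b : ℕ) then 1
  else if Even T.card ∧ (min (a : ℕ) (b : ℕ) < (m : ℕ) ∧ (m : ℕ) < max (a : ℕ) (b : ℕ)) then 3
  else if ∃ t ∈ T, (m : ℕ) = N + (t : ℕ) then 3 else 0

lemma letters_oth {a b c : Fin 4}
    (h : (a = 0 ∧ c = b) ∨ (b = 0 ∧ c = a) ∨ (a = b ∧ c = 0)) :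
    pauli a * pauli b = pauli c ∧ pauli b * pauli a = pauli c := by
  rcases h with ⟨h1, h2⟩ | ⟨h1, h2⟩ | ⟨h1, h2⟩ <;> subst h1 <;> subst h2
  · rw [pauli_zero]; simp
  · rw [pauli_zero]; simp
  · rw [pauli_mul_self, pauli_zero]; exact ⟨rfl, rfl⟩

end Comb

section Deriv

variable {N : ℕ} {G : SimpleGraph (Fin N)}

lemma gen_up1 {a b : Fin N} (hab : G.Adj a b) :
    ladderString (uE a) (uE b) 1 1 ∈ S_Hub N G :=
  Set.mem_union_left _ ⟨a, b, hab, Or.inl rfl⟩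

lemma gen_dn1 {a b : Fin N} (hab : G.Adj a b) :
    ladderString (dE a) (dE b) 1 1 ∈ S_Hub N G :=
  Set.mem_union_left _ ⟨a, b, hab, Or.inr (Or.inr (Or.inl rfl))⟩

lemma gen_dn2 {a b : Fin N} (hab : G.Adj a b) :
    ladderString (dE a) (dE b) 2 2 ∈ S_Hub N G :=
  Set.mem_union_left _ ⟨a, b, hab, Or.inr (Or.inr (Or.inr rfl))⟩

lemma gen_zz (i : Fin N) : zzString (uE i) (dE i) ∈ S_Hub N G :=
  Set.mem_union_right _ ⟨i, rfl⟩

lemma memA_Mstr_base {a b : Fin N} (hab : G.Adj a b) :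
    memA (S_Hub N G) (Mstr N a b a) := by
  have ha := a.isLt
  have hb := b.isLt
  have hne : (a : ℕ) ≠ (b : ℕ) := by simpa [Fin.ext_iff] using hab.ne
  have key : ∀ m : Fin (2 * N), m ≠ uE a →
      (zzString (uE a) (dE a) m = 0 ∧ Mstr N a b a m = ladderString (uE a) (uE b) 1 1 m) ∨
      (ladderString (uE a) (uE b) 1 1 m = 0 ∧ Mstr N a b a m = zzString (uE a) (dE a) m) ∨
      (zzString (uE a) (dE a) m = ladderString (uE a) (uE b) 1 1 m ∧ Mstr N a b a m = 0) := by
    intro m hm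
    have hm2 := m.isLt
    have hm' : (m : ℕ) ≠ (a : ℕ) := by simpa [Fin.ext_iff, uE] using hm
    simp only [zz_apply, ladder_apply, Mstr, uE_val, dE_val]
    delta uE dE at *
    split_ifs <;> first | decide | omega
  refine memA_bracket (Mstr N a b a) (uE a) Complex.I
    (memA_of_mem (gen_zz a)) (memA_of_mem (gen_up1 hab)) (Or.inl rfl) ?_ ?_
    (fun m hm => (letters_oth (key m hm)).1) (fun m hm => (letters_oth (key m hm)).2)
  · have e1 : zzString (uE a) (dE a) (uE a) = 3 := by simp [zz_apply]
    have e2 : ladderString (uE a) (uE b) 1 1 (uE a) = 1 := by simp [ladder_apply]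
    have e3 : Mstr N a b a (uE a) = 2 := by simp [Mstr]
    rw [e1, e2, e3]; exact pauli_ZX
  · have e1 : zzString (uE a) (dE a) (uE a) = 3 := by simp [zz_apply]
    have e2 : ladderString (uE a) (uE b) 1 1 (uE a) = 1 := by simp [ladder_apply]
    have e3 : Mstr N a b a (uE a) = 2 := by simp [Mstr]
    rw [e1, e2, e3]; exact pauli_XZ

lemma memA_Mstr_move {a b j k : Fin N} (hab : G.Adj a b) (hjk : G.Adj j k)
    (hj : memA (S_Hub N G) (Mstr N a b j)) :
    memA (S_Hub N G) (Mstr N a b k) := by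
  have ha := a.isLt
  have hb := b.isLt
  have hjlt := j.isLt
  have hklt := k.isLt
  have hne : (a : ℕ) ≠ (b : ℕ) := by simpa [Fin.ext_iff] using hab.ne
  have hnejk : (j : ℕ) ≠ (k : ℕ) := by simpa [Fin.ext_iff] using hjk.ne
  -- step 1 : bracket with X-ladder at dE j
  have step1 : memA (S_Hub N G) (T1str N a b j k) := by
    have key : ∀ m : Fin (2 * N), m ≠ dE j →
        (Mstr N a b j m = 0 ∧ T1str N a b j k m = ladderString (dE j) (dE k) 1 1 m) ∨
        (ladderString (dE j) (dE k) 1 1 m = 0 ∧ T1str N a b j k m = Mstr N a b j m) ∨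
        (Mstr N a b j m = ladderString (dE j) (dE k) 1 1 m ∧ T1str N a b j k m = 0) := by
      intro m hm
      have hm2 := m.isLt
      have hm' : (m : ℕ) ≠ N + (j : ℕ) := by simpa [Fin.ext_iff, dE] using hm
      simp only [ladder_apply, Mstr, T1str, dE_val]
      delta dE at *
      split_ifs <;> first | decide | omega
    refine memA_bracket (T1str N a b j k) (dE j) Complex.I
      hj (memA_of_mem (gen_dn1 hjk)) (Or.inl rfl) ?_ ?_
      (fun m hm => (letters_oth (key m hm)).1) (fun m hm => (letters_oth (key m hm)).2)
    · have e1 : Mstr N a b j (dE j) = 3 := by simp only [Mstr, dE_val]; split_ifs <;> omega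
      have e2 : ladderString (dE j) (dE k) 1 1 (dE j) = 1 := by simp [ladder_apply]
      have e3 : T1str N a b j k (dE j) = 2 := by
        simp only [T1str, dE_val]; split_ifs <;> omega
      rw [e1, e2, e3]; exact pauli_ZX
    · have e1 : Mstr N a b j (dE j) = 3 := by simp only [Mstr, dE_val]; split_ifs <;> omega
      have e2 : ladderString (dE j) (dE k) 1 1 (dE j) = 1 := by simp [ladder_apply]
      have e3 : T1str N a b j k (dE j) = 2 := by
        simp only [T1str, dE_val]; split_ifs <;> omega
      rw [e1, e2, e3]; exact pauli_XZ
  -- step 2 : bracket with Y-ladder at dE k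
  have key : ∀ m : Fin (2 * N), m ≠ dE k →
      (T1str N a b j k m = 0 ∧ Mstr N a b k m = ladderString (dE j) (dE k) 2 2 m) ∨
      (ladderString (dE j) (dE k) 2 2 m = 0 ∧ Mstr N a b k m = T1str N a b j k m) ∨
      (T1str N a b j k m = ladderString (dE j) (dE k) 2 2 m ∧ Mstr N a b k m = 0) := by
    intro m hm
    have hm2 := m.isLt
    have hm' : (m : ℕ) ≠ N + (k : ℕ) := by simpa [Fin.ext_iff, dE] using hm
    simp only [ladder_apply, Mstr, T1str, dE_val]
    delta dE at *
    split_ifs <;> first | decide | omega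
  refine memA_bracket (Mstr N a b k) (dE k) Complex.I
    step1 (memA_of_mem (gen_dn2 hjk)) (Or.inl rfl) ?_ ?_
    (fun m hm => (letters_oth (key m hm)).1) (fun m hm => (letters_oth (key m hm)).2)
  · have e1 : T1str N a b j k (dE k) = 1 := by
      simp only [T1str, dE_val]; split_ifs <;> omega
    have e2 : ladderString (dE j) (dE k) 2 2 (dE k) = 2 := by
      simp only [ladder_apply, dE_val]; split_ifs <;> omega
    have e3 : Mstr N a b k (dE k) = 3 := by simp only [Mstr, dE_val]; split_ifs <;> omega
    rw [e1, e2, e3]; exact pauli_XY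
  · have e1 : T1str N a b j k (dE k) = 1 := by
      simp only [T1str, dE_val]; split_ifs <;> omega
    have e2 : ladderString (dE j) (dE k) 2 2 (dE k) = 2 := by
      simp only [ladder_apply, dE_val]; split_ifs <;> omega
    have e3 : Mstr N a b k (dE k) = 3 := by simp only [Mstr, dE_val]; split_ifs <;> omega
    rw [e1, e2, e3]; exact pauli_YX

end Deriv

section Toggle

variable {N : ℕ} {G : SimpleGraph (Fin N)}

lemma toggle_key {a b k : Fin N} {T : Finset (Fin N)} (hab : G.Adj a b)
    (hk : k ∉ T) :
    ∀ m : Fin (2 * N), m ≠ uE a →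
      (Pstr a b T m = 0 ∧ Pstr a b (insert k T) m = Mstr N a b k m) ∨
      (Mstr N a b k m = 0 ∧ Pstr a b (insert k T) m = Pstr a b T m) ∨
      (Pstr a b T m = Mstr N a b k m ∧ Pstr a b (insert k T) m = 0) := by
  have ha := a.isLt
  have hb := b.isLt
  have hklt := k.isLt
  have hne : (a : ℕ) ≠ (b : ℕ) := by simpa [Fin.ext_iff] using hab.ne
  have hEins : Even (insert k T).card ↔ ¬ Even T.card := by
    rw [Finset.card_insert_of_notMem hk, Nat.even_add_one]
  intro m hm
  have hm2 := m.isLt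
  have hm' : (m : ℕ) ≠ (a : ℕ) := by simpa [Fin.ext_iff, uE] using hm
  have hmem_ins : (∃ t ∈ insert k T, (m : ℕ) = N + (t : ℕ)) ↔
      ((m : ℕ) = N + (k : ℕ) ∨ ∃ t ∈ T, (m : ℕ) = N + (t : ℕ)) := by
    simp [Finset.mem_insert, or_and_right, exists_or]
  simp only [Pstr, Mstr, hmem_ins, hEins, uE_val]
  by_cases hx : ∃ t ∈ T, (m : ℕ) = N + (t : ℕ)
  · obtain ⟨t, ht, hmt⟩ := hx
    have htk : t ≠ k := fun h => hk (h ▸ ht)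
    have hmk : (m : ℕ) ≠ N + (k : ℕ) := by
      rw [hmt]; intro hh; exact htk (Fin.ext (by omega))
    have hx' : ∃ t ∈ T, (m : ℕ) = N + (t : ℕ) := ⟨t, ht, hmt⟩
    have hmN : N ≤ (m : ℕ) := by omega
    by_cases hE : Even T.card <;>
      simp only [hx', hE, not_true, not_false_iff, if_true, if_false, true_and, false_and,
        and_true, and_false, iff_true, iff_false, or_true, true_or, or_false, false_or] <;>
      clear hx' hab hk hEins hmem_ins hE hm htk ht <;>
      split_ifs <;> first | decide | omega
  · by_cases hE : Even T.card <;>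
      simp only [hx, hE, not_true, not_false_iff, if_true, if_false, true_and, false_and,
        and_true, and_false, iff_true, iff_false, or_true, true_or, or_false, false_or] <;>
      clear hx hab hk hEins hmem_ins hE hm <;>
      split_ifs <;> first | decide | omega

lemma Pstr_empty {a b : Fin N} :
    Pstr a b (∅ : Finset (Fin N)) = ladderString (uE a) (uE b) 1 1 := by
  funext m
  simp [Pstr, ladder_apply]

lemma memA_Pstr_insert {a b k : Fin N} {T : Finset (Fin N)} (hab : G.Adj a b)
    (hk : k ∉ T) (hT : memA (S_Hub N G) (Pstr a b T))
    (hM : memA (S_Hub N G) (Mstr N a b k)) :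
    memA (S_Hub N G) (Pstr a b (insert k T)) := by
  have ha := a.isLt
  have hb := b.isLt
  have hklt := k.isLt
  have hne : (a : ℕ) ≠ (b : ℕ) := by simpa [Fin.ext_iff] using hab.ne
  have hEins : Even (insert k T).card ↔ ¬ Even T.card := by
    rw [Finset.card_insert_of_notMem hk, Nat.even_add_one]
  have key := toggle_key (G := G) hab hk
  by_cases hE : Even T.card
  · have e1 : Pstr a b T (uE a) = 1 := by simp [Pstr, hE]
    have e2 : Mstr N a b k (uE a) = 2 := by simp [Mstr]
    have hEi : ¬ Even (insert k T).card := fun h => (hEins.mp h) hE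
    have e3 : Pstr a b (insert k T) (uE a) = 3 := by simp [Pstr, hEi]
    refine memA_bracket (Pstr a b (insert k T)) (uE a) Complex.I hT hM (Or.inl rfl) ?_ ?_
      (fun m hm => (letters_oth (key m hm)).1) (fun m hm => (letters_oth (key m hm)).2)
    · rw [e1, e2, e3]; exact pauli_XY
    · rw [e1, e2, e3]; exact pauli_YX
  · have e1 : Pstr a b T (uE a) = 3 := by simp [Pstr, hE]
    have e2 : Mstr N a b k (uE a) = 2 := by simp [Mstr]
    have hEi : Even (insert k T).card := hEins.mpr hE
    have e3 : Pstr a b (insert k T) (uE a) = 1 := by simp [Pstr, hEi]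
    refine memA_bracket (Pstr a b (insert k T)) (uE a) (-Complex.I) hT hM (Or.inr rfl) ?_ ?_
      (fun m hm => (letters_oth (key m hm)).1) (fun m hm => (letters_oth (key m hm)).2)
    · rw [e1, e2, e3]; exact pauli_ZY
    · rw [e1, e2, e3, neg_neg]; exact pauli_YZ

lemma Pstr_injective (a b : Fin N) : Function.Injective (Pstr (N := N) a b) := by
  have ha := a.isLt
  have hb := b.isLt
  have hsub : ∀ S S' : Finset (Fin N), Pstr a b S = Pstr a b S' → S ⊆ S' := by
    intro S S' hss t ht
    by_contra hts
    have h := congrFun hss (dE t)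
    have e1 : Pstr a b S (dE t) = 3 := by
      have htlt := t.isLt
      simp only [Pstr, dE_val]
      simp only [show ¬ (N + (t : ℕ) = a) by omega, show ¬ (N + (t : ℕ) = b) by omega,
        show ¬ (N + (t : ℕ) < max (a : ℕ) b) by omega, and_false, false_and,
        show ∃ t' ∈ S, N + (t : ℕ) = N + t' from ⟨t, ht, rfl⟩, ↓reduceIte]
    have e2 : Pstr a b S' (dE t) = 0 := by
      have htlt := t.isLt
      simp only [Pstr, dE_val]
      simp only [show ¬ (N + (t : ℕ) = a) by omega, show ¬ (N + (t : ℕ) = b) by omega,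
        show ¬ (N + (t : ℕ) < max (a : ℕ) b) by omega, and_false, false_and, ↓reduceIte]
      refine if_neg (fun hh => ?_)
      obtain ⟨t', ht', hh'⟩ := hh
      have : t' = t := Fin.ext (by omega)
      exact hts (this ▸ ht')
    rw [e1, e2] at h
    exact absurd h (by decide)
  exact fun S S' h => le_antisymm (hsub _ _ h) (hsub _ _ h.symm)

end Toggle

/-- The Hamiltonian algebra of the Hubbard model on a connected graph has dimension
at least `2^(N−1)`. -/
theorem finrank_hamAlg_Hubbard_ge (N : ℕ) (hN : 1 ≤ N)
    (G : SimpleGraph (Fin N)) (hG : G.Connected) :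
    2 ^ (N - 1) ≤ Module.finrank ℝ (hamAlg (S_Hub N G)) := by
  rcases eq_or_lt_of_le hN with h1 | h2
  · -- case N = 1
    have h1' : N = 1 := h1.symm
    subst h1'
    have hle := card_le_finrank_hamAlg (S_Hub 1 G)
      (fun _ : Unit => zzString (uE (0 : Fin 1)) (dE 0))
      (fun x y _ => Subsingleton.elim x y)
      (fun _ => memA_of_mem (gen_zz 0))
    simpa using hle
  · -- case 1 < N
    have ha0 : (0 : ℕ) < N := by omega
    obtain ⟨b, hab⟩ : ∃ b, G.Adj (⟨0, ha0⟩ : Fin N) b := by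
      obtain ⟨w⟩ := hG.preconnected ⟨0, ha0⟩ ⟨1, by omega⟩
      cases w with
      | cons h _ => exact ⟨_, h⟩
    set a : Fin N := ⟨0, ha0⟩ with ha_def
    have hMall : ∀ k, memA (S_Hub N G) (Mstr N a b k) := by
      have htrans : ∀ (x y : Fin N) (w : G.Walk x y),
          memA (S_Hub N G) (Mstr N a b x) → memA (S_Hub N G) (Mstr N a b y) := by
        intro x y w
        induction w with
        | nil => exact id
        | cons h _ ih => exact fun hx => ih (memA_Mstr_move hab h hx)
      intro k
      obtain ⟨w⟩ := hG.preconnected a k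
      exact htrans a k w (memA_Mstr_base hab)
    have hPall : ∀ T : Finset (Fin N), memA (S_Hub N G) (Pstr a b T) := by
      intro T
      induction T using Finset.induction_on with
      | empty => rw [Pstr_empty]; exact memA_of_mem (gen_up1 hab)
      | @insert k T hk ih => exact memA_Pstr_insert hab hk ih (hMall k)
    have hcard := card_le_finrank_hamAlg (S_Hub N G) (Pstr a b) (Pstr_injective a b) hPall
    calc 2 ^ (N - 1) ≤ 2 ^ N := Nat.pow_le_pow_right (by norm_num) (by omega)
      _ ≤ _ := by simpa [Fintype.card_finset] using hcard
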